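/- arXiv:1611.06150 — 8 statements merged into one kernel-verified Lean document; each statement's English description precedes it below -/
import Mathlib

section
/- Correctness of OKCN: Let q, m, g, d be positive integers with m ≥ 2, g ≥ 2, and (2d+1)·m < q·(1 − 1/g). Let q' = lcm(q,m), α = q'/q, β = q'/m. Suppose σ₁, σ₂ ∈ ℤ_q satisfy |σ₁ − σ₂|_q ≤ d. Let e be any integer with −⌊(α−1)/2⌋ ≤ e ≤ ⌊α/2⌋, let σ_A = (α·σ₁ + e) mod q', k₁ = ⌊σ_A/β⌋, v' = σ_A mod β, v = ⌊v'·g/β⌋, and k₂ = ⌊α·σ₂/β − (v + 1/2)/g⌉ mod m. Then k₂ = k₁. -/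
/-- Correctness of OKCN. -/
theorem stmt_3 (q m g d : ℕ) (hm : 2 ≤ m) (hg : 2 ≤ g)
    (hcon : ((2 * d + 1) * m : ℝ) < (q : ℝ) * (1 - 1 / (g : ℝ)))
    (q' α β : ℕ) (hq' : q' = Nat.lcm q m) (hα : α = q' / q) (hβ : β = q' / m)
    (σ₁ σ₂ : ℤ) (h1 : 0 ≤ σ₁ ∧ σ₁ < (q : ℤ)) (h2 : 0 ≤ σ₂ ∧ σ₂ < (q : ℤ))
    (hdist : min ((σ₁ - σ₂) % (q : ℤ)) ((q : ℤ) - (σ₁ - σ₂) % (q : ℤ)) ≤ (d : ℤ))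
    (e : ℤ) (he1 : -(((α : ℤ) - 1) / 2) ≤ e) (he2 : e ≤ (α : ℤ) / 2)
    (σA k₁ v' v k₂ : ℤ)
    (hσA : σA = ((α : ℤ) * σ₁ + e) % (q' : ℤ))
    (hk₁ : k₁ = σA / (β : ℤ)) (hv' : v' = σA % (β : ℤ))
    (hv : v = v' * (g : ℤ) / (β : ℤ))
    (hk₂ : k₂ = round ((α : ℝ) * (σ₂ : ℝ) / (β : ℝ) - ((v : ℝ) + 1/2) / (g : ℝ)) % (m : ℤ)) :
    k₂ = k₁ := by
  obtain ⟨h1l, h1r⟩ := h1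
  obtain ⟨h2l, h2r⟩ := h2
  have hm0 : 0 < m := by omega
  have hg0 : 0 < g := by omega
  have hgR : (0:ℝ) < g := by exact_mod_cast hg0
  have hq0 : 0 < q := by
    rcases Nat.eq_zero_or_pos q with h | h
    · subst h
      have h0 : (0:ℝ) < (2*(d:ℝ)+1)*(m:ℝ) := by positivity
      push_cast at hcon
      simp at hcon
      nlinarith
    · exact h
  have hq'0 : 0 < q' := by
    rw [hq']
    exact Nat.pos_of_ne_zero (Nat.lcm_ne_zero (by omega) (by omega))
  have hαq : α * q = q' := by
    rw [hα, hq']; exact Nat.div_mul_cancel (Nat.dvd_lcm_left q m)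
  have hβm : β * m = q' := by
    rw [hβ, hq']; exact Nat.div_mul_cancel (Nat.dvd_lcm_right q m)
  have hα0 : 0 < α := by
    rcases Nat.eq_zero_or_pos α with h | h
    · rw [h, zero_mul] at hαq; omega
    · exact h
  have hβ0 : 0 < β := by
    rcases Nat.eq_zero_or_pos β with h | h
    · rw [h, zero_mul] at hβm; omega
    · exact h
  have hαqZ : (α:ℤ) * q = (q':ℤ) := by exact_mod_cast hαq
  have hβmZ : (β:ℤ) * m = (q':ℤ) := by exact_mod_cast hβm
  have hβZ0 : (0:ℤ) < (β:ℤ) := by exact_mod_cast hβ0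
  -- decompose σ₂ = σ₁ + δ + t*q with |δ| ≤ d
  have hr0 : 0 ≤ (σ₁ - σ₂) % (q:ℤ) := Int.emod_nonneg _ (by exact_mod_cast hq0.ne')
  have hrq : (σ₁ - σ₂) % (q:ℤ) < q := Int.emod_lt_of_pos _ (by exact_mod_cast hq0)
  obtain ⟨δ, t, hδ1, hδ2, hst⟩ :
      ∃ δ t : ℤ, -(d:ℤ) ≤ δ ∧ δ ≤ d ∧ σ₂ = σ₁ + δ + t * q := by
    have hed := Int.emod_add_mul_ediv (σ₁ - σ₂) (q:ℤ)
    rcases min_le_iff.mp hdist with h | h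
    · exact ⟨-((σ₁ - σ₂) % q), -((σ₁ - σ₂) / q), by omega, by omega,
        by linear_combination hed⟩
    · exact ⟨(q:ℤ) - (σ₁ - σ₂) % q, -((σ₁ - σ₂) / q) - 1, by omega, by omega,
        by linear_combination hed⟩
  -- θ decomposition
  set θ := ((α:ℤ) * σ₁ + e) / (q':ℤ) with hθdef
  have hθ : (α:ℤ) * σ₁ + e = σA + θ * (q':ℤ) := by
    rw [hσA]
    linear_combination - Int.emod_add_mul_ediv ((α:ℤ)*σ₁+e) (q':ℤ)
  have hσA0 : 0 ≤ σA := hσA ▸ Int.emod_nonneg _ (by exact_mod_cast hq'0.ne')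
  have hσAlt : σA < q' := hσA ▸ Int.emod_lt_of_pos _ (by exact_mod_cast hq'0)
  have hdec : σA = k₁ * β + v' := by
    rw [hk₁, hv']
    linear_combination - Int.emod_add_mul_ediv σA (β:ℤ)
  have hv'0 : 0 ≤ v' := hv' ▸ Int.emod_nonneg _ hβZ0.ne'
  have hv'lt : v' < β := hv' ▸ Int.emod_lt_of_pos _ hβZ0
  have hk₁0 : 0 ≤ k₁ := hk₁ ▸ Int.ediv_nonneg hσA0 hβZ0.le
  have hk₁m : k₁ < m := by
    rw [hk₁]
    refine (Int.ediv_lt_iff_lt_mul hβZ0).mpr ?_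
    have hcm : (m:ℤ) * β = β * m := mul_comm _ _
    linarith [hβmZ]
  have hv1 : v * β ≤ v' * g := hv ▸ Int.ediv_mul_le (v' * g) hβZ0.ne'
  have hv2 : v' * g < (v + 1) * β := hv ▸ Int.lt_ediv_add_one_mul_self (v' * g) hβZ0
  -- key integer identity
  have hkey : (α:ℤ) * σ₂ = k₁ * β + v' - e + α * δ + (θ + t) * (q':ℤ) := by
    linear_combination (α:ℤ) * hst + hθ + hdec + t * hαqZ
  -- real versions
  have hβR : (0:ℝ) < β := by exact_mod_cast hβ0
  have hmR : (0:ℝ) < m := by exact_mod_cast hm0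
  have hαR : (0:ℝ) < α := by exact_mod_cast hα0
  have hq'R : ((q':ℕ):ℝ) = (β:ℝ) * m := by exact_mod_cast hβmZ.symm
  have h2R : (α:ℝ) * q = (β:ℝ) * m := by
    have : α * q = β * m := by omega
    exact_mod_cast this
  have hkeyR : (α:ℝ)*(σ₂:ℝ) = (k₁:ℝ)*β + v' - e + (α:ℝ)*δ + ((θ:ℝ)+t)*((β:ℝ)*m) := by
    rw [← hq'R]; exact_mod_cast hkey
  have hA1R' : (v:ℝ)*β ≤ (v':ℝ)*g := by exact_mod_cast hv1
  have hA2R : (v':ℝ)*g < ((v:ℝ)+1)*β := by exact_mod_cast hv2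
  have hδ1R : -(d:ℝ) ≤ (δ:ℝ) := by exact_mod_cast hδ1
  have hδ2R : (δ:ℝ) ≤ (d:ℝ) := by exact_mod_cast hδ2
  -- e bounds in ℝ
  have he2R : (e:ℝ) ≤ (α:ℝ)/2 := by
    have h := Int.ediv_mul_le (α:ℤ) (by norm_num : (2:ℤ) ≠ 0)
    have h' : ((α:ℤ)/2 : ℤ) * 2 ≤ (α:ℤ) := h
    have hc : (((α:ℤ)/2 : ℤ):ℝ) * 2 ≤ (α:ℝ) := by exact_mod_cast h'
    have he : (e:ℝ) ≤ (((α:ℤ)/2 : ℤ):ℝ) := by exact_mod_cast he2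
    linarith
  have he1R : -((α:ℝ)/2) ≤ (e:ℝ) := by
    have h := Int.ediv_mul_le ((α:ℤ)-1) (by norm_num : (2:ℤ) ≠ 0)
    have hc : ((((α:ℤ)-1)/2 : ℤ):ℝ) * 2 ≤ (α:ℝ)-1 := by exact_mod_cast h
    have he : -((((α:ℤ)-1)/2 : ℤ):ℝ) ≤ (e:ℝ) := by exact_mod_cast he1
    linarith
  -- constraint in convenient form
  have hconn : (g:ℝ)*((2*(d:ℝ)+1)*(m:ℝ)) < (q:ℝ)*((g:ℝ)-1) := by
    have h := mul_lt_mul_of_pos_left hcon hgR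
    have heq : (g:ℝ)*((q:ℝ)*(1-1/(g:ℝ))) = (q:ℝ)*((g:ℝ)-1) := by
      have hgne : (g:ℝ) ≠ 0 := hgR.ne'
      field_simp
    push_cast at h
    linarith [heq, h]
  have hCR' : (g:ℝ)*(α:ℝ)*(2*(d:ℝ)+1) < (β:ℝ)*((g:ℝ)-1) := by
    have h3 := mul_lt_mul_of_pos_left hconn hαR
    have h5 : (α:ℝ)*((q:ℝ)*((g:ℝ)-1)) = (β:ℝ)*((g:ℝ)-1)*m := by
      linear_combination ((g:ℝ)-1) * h2R
    have h4 : (g:ℝ)*(α:ℝ)*(2*(d:ℝ)+1)*m < (β:ℝ)*((g:ℝ)-1)*m := by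
      linarith [h3, h5]
    exact lt_of_mul_lt_mul_right h4 hmR.le
  -- the error term
  set E : ℝ := ((v':ℝ) + (α:ℝ)*δ - e)/β - ((v:ℝ)+1/2)/g with hE
  have hEeq : E + 1/2 =
      ((g:ℝ)*((v':ℝ) + (α:ℝ)*δ - e) - (β:ℝ)*((v:ℝ)+1/2) + (β:ℝ)*g/2)/((β:ℝ)*g) := by
    rw [hE]; field_simp
  have hgα : (0:ℝ) ≤ (g:ℝ)*(α:ℝ) := by positivity
  have hprod1 : (g:ℝ)*(α:ℝ)*(-(d:ℝ)) ≤ (g:ℝ)*(α:ℝ)*δ :=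
    mul_le_mul_of_nonneg_left hδ1R hgα
  have hprod2 : (g:ℝ)*(α:ℝ)*δ ≤ (g:ℝ)*(α:ℝ)*(d:ℝ) :=
    mul_le_mul_of_nonneg_left hδ2R hgα
  have hprod3 : (g:ℝ)*(e:ℝ) ≤ (g:ℝ)*((α:ℝ)/2) :=
    mul_le_mul_of_nonneg_left he2R hgR.le
  have hprod4 : (g:ℝ)*(-((α:ℝ)/2)) ≤ (g:ℝ)*(e:ℝ) :=
    mul_le_mul_of_nonneg_left he1R hgR.le
  have hE1 : (0:ℝ) ≤ E + 1/2 := by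
    rw [hEeq]
    apply div_nonneg _ (by positivity)
    linarith [hA1R', hprod1, hprod3, hCR']
  have hE2 : E + 1/2 < 1 := by
    rw [hEeq, div_lt_one (by positivity)]
    linarith [hA2R, hprod2, hprod4, hCR']
  -- x = N + E
  set N : ℤ := k₁ + (θ + t) * m with hN
  have hx : (α:ℝ)*(σ₂:ℝ)/(β:ℝ) - ((v:ℝ)+1/2)/(g:ℝ) = (N:ℝ) + E := by
    rw [hN, hE]
    push_cast
    field_simp
    linear_combination (2*(g:ℝ)) * hkeyR
  have hround : round ((α:ℝ)*(σ₂:ℝ)/(β:ℝ) - ((v:ℝ)+1/2)/(g:ℝ)) = N := by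
    rw [round_eq, Int.floor_eq_iff]
    constructor
    · rw [hx]; linarith
    · rw [hx]; linarith
  rw [hk₂, hround, hN, Int.add_mul_emod_self_right, Int.emod_eq_of_lt hk₁0 hk₁m]
end

section
/- Correctness of the simplified OKCN (power-of-2 parameters): Let q = m·g with m, g powers of 2 and 2·m·d < q. Suppose σ₁, σ₂ ∈ ℤ_q with |σ₁ − σ₂|_q ≤ d. Let k₁ = ⌊σ₁/g⌋, v = σ₁ mod g, and k₂ = ⌊(σ₂ − v)/g⌉ mod m. Then k₂ = k₁. -/
/-- Correctness of the simplified OKCN with power-of-2 parameters. -/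
theorem stmt_4 (a b : ℕ) (q m g d : ℕ) (hm : m = 2 ^ a) (hg : g = 2 ^ b)
    (hq : q = m * g) (hd : 2 * m * d < q)
    (σ₁ σ₂ : ℤ) (h1 : 0 ≤ σ₁ ∧ σ₁ < (q : ℤ)) (h2 : 0 ≤ σ₂ ∧ σ₂ < (q : ℤ))
    (hdist : min ((σ₁ - σ₂) % (q : ℤ)) ((q : ℤ) - (σ₁ - σ₂) % (q : ℤ)) ≤ (d : ℤ))
    (k₁ v k₂ : ℤ)
    (hk₁ : k₁ = σ₁ / (g : ℤ)) (hv : v = σ₁ % (g : ℤ))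
    (hk₂ : k₂ = round (((σ₂ : ℝ) - (v : ℝ)) / (g : ℝ)) % (m : ℤ)) :
    k₂ = k₁ := by
  have hm1 : (1:ℤ) ≤ (m:ℤ) := by
    have : 1 ≤ m := by rw [hm]; exact Nat.one_le_two_pow
    exact_mod_cast this
  have hg1 : (1:ℤ) ≤ (g:ℤ) := by
    have : 1 ≤ g := by rw [hg]; exact Nat.one_le_two_pow
    exact_mod_cast this
  have hg0 : (0:ℤ) < (g:ℤ) := by linarith
  have hqZ : (q:ℤ) = (m:ℤ) * (g:ℤ) := by exact_mod_cast congrArg (Nat.cast : ℕ → ℤ) hq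
  have hdZ : 2 * (m:ℤ) * (d:ℤ) < (q:ℤ) := by exact_mod_cast hd
  have hq0 : (0:ℤ) < (q:ℤ) := by nlinarith [hdZ, hm1, Int.natCast_nonneg d]
  have hdg : 2 * (d:ℤ) < (g:ℤ) := by nlinarith [hdZ, hqZ]
  -- extract e and t
  obtain ⟨e, t, het, he⟩ : ∃ e t : ℤ, σ₂ = σ₁ - e + t * (q:ℤ) ∧ 2 * |e| < (g:ℤ) := by
    have key := Int.mul_ediv_add_emod (σ₁ - σ₂) (q:ℤ)
    have hmod0 : 0 ≤ (σ₁ - σ₂) % (q:ℤ) := Int.emod_nonneg _ (ne_of_gt hq0)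
    have hmodq : (σ₁ - σ₂) % (q:ℤ) < (q:ℤ) := Int.emod_lt_of_pos _ hq0
    rcases min_le_iff.mp hdist with h | h
    · refine ⟨(σ₁ - σ₂) % (q:ℤ), -((σ₁ - σ₂) / (q:ℤ)), by linear_combination key, ?_⟩
      rw [abs_of_nonneg hmod0]; linarith
    · refine ⟨(σ₁ - σ₂) % (q:ℤ) - (q:ℤ), -((σ₁ - σ₂) / (q:ℤ)) - 1, by linear_combination key, ?_⟩
      rw [abs_of_nonpos (by linarith)]; linarith
  -- σ₁ decomposition
  have hs1 : σ₁ = (g:ℤ) * k₁ + v := by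
    rw [hk₁, hv]; exact (Int.mul_ediv_add_emod σ₁ (g:ℤ)).symm
  -- key: σ₂ - v = g * (k₁ + t*m) - e
  have hs2 : σ₂ - v = (g:ℤ) * (k₁ + t * (m:ℤ)) - e := by
    rw [het, hs1, hqZ]; ring
  -- real value
  have hreal : ((σ₂ : ℝ) - (v : ℝ)) / (g : ℝ) = ((k₁ + t * (m:ℤ) : ℤ) : ℝ) + (-(e:ℝ)) / (g:ℝ) := by
    have hgR : (0:ℝ) < (g:ℝ) := by exact_mod_cast hg0
    have : ((σ₂ - v : ℤ) : ℝ) = (g:ℝ) * ((k₁ + t * (m:ℤ) : ℤ) : ℝ) - (e:ℝ) := by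
      exact_mod_cast congrArg (Int.cast : ℤ → ℝ) hs2
    push_cast at this ⊢
    field_simp
    linarith [this]
  have hround0 : round ((-(e:ℝ)) / (g:ℝ)) = 0 := by
    have hgR : (0:ℝ) < (g:ℝ) := by exact_mod_cast hg0
    have heR : 2 * |(e:ℝ)| < (g:ℝ) := by exact_mod_cast he
    have habs : |(-(e:ℝ)) / (g:ℝ)| < 1/2 := by
      rw [abs_div, abs_neg, abs_of_pos hgR, div_lt_iff₀ hgR]
      linarith
    rw [round_eq_zero_iff]
    obtain ⟨hl, hr⟩ := abs_lt.mp habs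
    exact ⟨le_of_lt hl, hr⟩
  have hroundv : round (((σ₂ : ℝ) - (v : ℝ)) / (g : ℝ)) = k₁ + t * (m:ℤ) := by
    rw [hreal, round_intCast_add, hround0, add_zero]
  have hk₁0 : 0 ≤ k₁ := by
    rw [hk₁]; exact Int.ediv_nonneg h1.1 (le_of_lt hg0)
  have hk₁m : k₁ < (m:ℤ) := by
    rw [hk₁]
    rw [Int.ediv_lt_iff_lt_mul hg0]
    rw [hqZ] at h1
    linarith [h1.2]
  rw [hk₂, hroundv, Int.add_mul_emod_self_right, Int.emod_eq_of_lt hk₁0 hk₁m]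
end

section
/- Correctness of AKCN: Let q, m, g, d be positive integers with (2d+1)·m < q·(1 − m/g). For σ₁, σ₂ ∈ ℤ_q with |σ₁ − σ₂|_q ≤ d and any k₁ ∈ ℤ_m, define v = ⌊g·(σ₁ + ⌊k₁·q/m⌉)/q⌉ mod g and k₂ = ⌊m·(v/g − σ₂/q)⌉ mod m. Then k₂ = k₁. -/
lemma round_int_add_small (n : ℤ) (e : ℝ) (h : |e| < 1/2) : round ((n:ℝ) + e) = n := by
  obtain ⟨h1, h2⟩ := abs_lt.mp h
  rw [add_comm, round_add_intCast, round_eq_zero_iff.mpr ⟨by linarith, by norm_num; linarith⟩, zero_add]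

/-- Correctness of AKCN. -/
theorem stmt_6 (q m g d : ℕ) (hq : 0 < q) (hm : 0 < m) (hg : 0 < g)
    (hcon : ((2 * d + 1) * m : ℝ) < (q : ℝ) * (1 - (m : ℝ) / (g : ℝ)))
    (σ₁ σ₂ k₁ : ℤ)
    (h1 : 0 ≤ σ₁ ∧ σ₁ < (q : ℤ)) (h2 : 0 ≤ σ₂ ∧ σ₂ < (q : ℤ))
    (hk₁ : 0 ≤ k₁ ∧ k₁ < (m : ℤ))
    (hdist : min ((σ₁ - σ₂) % (q : ℤ)) ((q : ℤ) - (σ₁ - σ₂) % (q : ℤ)) ≤ (d : ℤ))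
    (v k₂ : ℤ)
    (hv : v = round ((g : ℝ) * ((σ₁ : ℝ) +
        ((round ((k₁ : ℝ) * (q : ℝ) / (m : ℝ)) : ℤ) : ℝ)) / (q : ℝ)) % (g : ℤ))
    (hk₂ : k₂ = round ((m : ℝ) * ((v : ℝ) / (g : ℝ) - (σ₂ : ℝ) / (q : ℝ))) % (m : ℤ)) :
    k₂ = k₁ := by
  obtain ⟨hk0, hkm⟩ := hk₁
  have hqR : (0:ℝ) < q := by exact_mod_cast hq
  have hmR : (0:ℝ) < m := by exact_mod_cast hm
  have hgR : (0:ℝ) < g := by exact_mod_cast hg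
  have hqz : (q:ℤ) ≠ 0 := by positivity
  -- decompose σ₁ - σ₂ = δ + q * N with |δ| ≤ d
  obtain ⟨δ, N, hδN, hδd⟩ : ∃ δ N : ℤ, σ₁ - σ₂ = δ + (q:ℤ) * N ∧ |δ| ≤ (d:ℤ) := by
    set r : ℤ := (σ₁ - σ₂) % (q:ℤ) with hr
    have hr0 : 0 ≤ r := Int.emod_nonneg _ hqz
    have hrq : r < (q:ℤ) := Int.emod_lt_of_pos _ (by exact_mod_cast hq)
    have hdef : σ₁ - σ₂ = r + (q:ℤ) * ((σ₁ - σ₂) / (q:ℤ)) := by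
      rw [hr, Int.emod_def]; ring
    rcases le_total r ((q:ℤ) - r) with h | h
    · refine ⟨r, (σ₁ - σ₂) / (q:ℤ), hdef, ?_⟩
      rw [abs_of_nonneg hr0]
      simpa [min_eq_left h] using hdist
    · refine ⟨r - q, (σ₁ - σ₂) / (q:ℤ) + 1, by linarith [hdef], ?_⟩
      rw [abs_of_nonpos (by linarith)]
      have := min_eq_right h ▸ hdist
      linarith
  set r₁ : ℤ := round ((k₁:ℝ) * (q:ℝ) / (m:ℝ)) with hr₁
  set v₀ : ℤ := round ((g:ℝ) * ((σ₁:ℝ) + (r₁:ℝ)) / (q:ℝ)) with hv₀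
  set t : ℤ := v₀ / (g:ℤ) with ht
  have hvt : v = v₀ - (g:ℤ) * t := by rw [hv, Int.emod_def]
  set ε₁ : ℝ := (r₁:ℝ) - (k₁:ℝ) * q / m with hε₁
  set ε₂ : ℝ := (v₀:ℝ) - (g:ℝ) * ((σ₁:ℝ) + (r₁:ℝ)) / q with hε₂
  have hε₁b : |ε₁| ≤ 1/2 := by
    rw [hε₁, abs_sub_comm]; exact abs_sub_round _
  have hε₂b : |ε₂| ≤ 1/2 := by
    rw [hε₂, abs_sub_comm]; exact abs_sub_round _
  set e : ℝ := (m:ℝ) * δ / q + (m:ℝ) * ε₁ / q + (m:ℝ) * ε₂ / g with he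
  have hX : (m:ℝ) * ((v:ℝ) / g - (σ₂:ℝ) / q) = ((k₁ + (m:ℤ) * (N - t) : ℤ) : ℝ) + e := by
    have hv' : (v:ℝ) = (v₀:ℝ) - (g:ℝ) * (t:ℝ) := by exact_mod_cast hvt
    have hδ' : (δ:ℝ) = (σ₁:ℝ) - (σ₂:ℝ) - (q:ℝ) * (N:ℝ) := by
      have : (σ₁:ℝ) - (σ₂:ℝ) = (δ:ℝ) + (q:ℝ) * (N:ℝ) := by exact_mod_cast hδN
      linarith
    rw [he, hε₁, hε₂, hv', hδ']
    push_cast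
    field_simp
    ring
  have heb : |e| < 1/2 := by
    have hδR : |(δ:ℝ)| ≤ (d:ℝ) := by exact_mod_cast hδd
    have h1 : |e| ≤ (m:ℝ) * d / q + (m:ℝ) * (1/2) / q + (m:ℝ) * (1/2) / g := by
      calc |e| ≤ |(m:ℝ) * δ / q + (m:ℝ) * ε₁ / q| + |(m:ℝ) * ε₂ / g| := abs_add_le _ _
        _ ≤ |(m:ℝ) * δ / q| + |(m:ℝ) * ε₁ / q| + |(m:ℝ) * ε₂ / g| := by
            linarith [abs_add_le ((m:ℝ) * δ / q) ((m:ℝ) * ε₁ / q)]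
        _ ≤ (m:ℝ) * d / q + (m:ℝ) * (1/2) / q + (m:ℝ) * (1/2) / g := by
            rw [abs_div, abs_div, abs_div, abs_mul, abs_mul, abs_mul,
              abs_of_nonneg hmR.le, abs_of_nonneg hqR.le, abs_of_nonneg hgR.le]
            gcongr
    have key : (m:ℝ) * d / q + (m:ℝ) * (1/2) / q + (m:ℝ) * (1/2) / g < 1/2 := by
      have hcon' : ((2*d+1) * (m:ℝ)) * g < q * g - q * m := by
        have h := mul_lt_mul_of_pos_right hcon hgR
        have h2 : (q:ℝ) * (1 - m/g) * g = q * g - q * m := by field_simp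
        rw [h2] at h; linarith
      have e1 : (m:ℝ) * d / q + (m:ℝ) * (1/2) / q + (m:ℝ) * (1/2) / g
          = ((2*d+1) * (m:ℝ) * g + m * q) / (2 * q * g) := by field_simp
      rw [e1, div_lt_iff₀ (by positivity)]
      linarith
    linarith
  have hround : round ((m:ℝ) * ((v:ℝ) / g - (σ₂:ℝ) / q)) = k₁ + (m:ℤ) * (N - t) := by
    rw [hX]; exact round_int_add_small _ _ heb
  rw [hk₂, hround, Int.add_mul_emod_self_left, Int.emod_eq_of_lt hk0 hkm]
end

section
/- Correctness of the power-of-2 AKCN variant: Let q, m be powers of 2 with m | q and 2·m·d < q, and set G = q/m. For σ₁, σ₂ ∈ ℤ_q with |σ₁ − σ₂|_q ≤ d and k₁ ∈ ℤ_m, define v = (σ₁ + k₁·G) mod q and k₂ = ⌊(v − σ₂)/G⌉ mod m. Then k₂ = k₁. -/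
/-- Correctness of the power-of-2 AKCN variant. -/
theorem stmt_7 (a b : ℕ) (q m d G : ℕ) (hq : q = 2 ^ a) (hm : m = 2 ^ b)
    (hdvd : m ∣ q) (hd : 2 * m * d < q) (hG : G = q / m)
    (σ₁ σ₂ k₁ : ℤ)
    (h1 : 0 ≤ σ₁ ∧ σ₁ < (q : ℤ)) (h2 : 0 ≤ σ₂ ∧ σ₂ < (q : ℤ))
    (hk₁ : 0 ≤ k₁ ∧ k₁ < (m : ℤ))
    (hdist : min ((σ₁ - σ₂) % (q : ℤ)) ((q : ℤ) - (σ₁ - σ₂) % (q : ℤ)) ≤ (d : ℤ))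
    (v k₂ : ℤ)
    (hv : v = (σ₁ + k₁ * (G : ℤ)) % (q : ℤ))
    (hk₂ : k₂ = round (((v : ℝ) - (σ₂ : ℝ)) / (G : ℝ)) % (m : ℤ)) :
    k₂ = k₁ := by
  have hm0 : 0 < m := hm ▸ Nat.pow_pos (n := b) (by norm_num : 0 < 2)
  have hq0 : 0 < q := hq ▸ Nat.pow_pos (n := a) (by norm_num : 0 < 2)
  have hqmG : q = m * G := by
    rw [hG, Nat.mul_div_cancel' hdvd]
  have hG0 : 0 < G := hG ▸ Nat.div_pos (Nat.le_of_dvd hq0 hdvd) hm0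
  have hdG : 2 * d < G := by
    have h' : m * (2 * d) < m * G := by
      calc m * (2 * d) = 2 * m * d := by ring
      _ < q := hd
      _ = m * G := hqmG
    exact lt_of_mul_lt_mul_left h' (Nat.zero_le m)
  -- extract e with |e| ≤ d and σ₁ - σ₂ ≡ e [mod q]
  have hqz : (q : ℤ) ≠ 0 := by exact_mod_cast hq0.ne'
  set r : ℤ := (σ₁ - σ₂) % (q : ℤ) with hr
  have hr0 : 0 ≤ r := Int.emod_nonneg _ hqz
  have hrq : r < q := Int.emod_lt_of_pos _ (by exact_mod_cast hq0)
  obtain ⟨e, he1, he2, hecong⟩ : ∃ e : ℤ, -(d : ℤ) ≤ e ∧ e ≤ d ∧ (q : ℤ) ∣ (σ₁ - σ₂ - e) := by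
    rcases min_le_iff.mp hdist with h | h
    · exact ⟨r, by omega, h, Int.dvd_self_sub_of_emod_eq rfl⟩
    · refine ⟨r - q, by omega, by omega, ?_⟩
      have : (q : ℤ) ∣ (σ₁ - σ₂ - r) := Int.dvd_self_sub_of_emod_eq rfl
      have : σ₁ - σ₂ - (r - q) = (σ₁ - σ₂ - r) + q := by ring
      rw [this]
      exact dvd_add ‹_› dvd_rfl
  -- v - σ₂ = e + G * (k₁ + m * s)
  have hvcong : (q : ℤ) ∣ (σ₁ + k₁ * G - v) := by
    rw [hv]; exact Int.dvd_self_sub_of_emod_eq rfl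
  have hdvd2 : (q : ℤ) ∣ (v - σ₂ - e - k₁ * G) := by
    have : v - σ₂ - e - k₁ * G = (σ₁ - σ₂ - e) - (σ₁ + k₁ * G - v) := by ring
    rw [this]; exact dvd_sub hecong hvcong
  obtain ⟨s, hs⟩ := hdvd2
  have hveq : v - σ₂ = e + G * (k₁ + m * s) := by
    have hq' : (q : ℤ) = m * G := by exact_mod_cast hqmG
    have : v - σ₂ = e + k₁ * G + q * s := by linarith [hs]
    rw [this, hq']; ring
  -- compute the rounding
  have hGr : (0 : ℝ) < (G : ℝ) := by exact_mod_cast hG0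
  have hcast : ((v - σ₂ : ℤ) : ℝ) = ((e + G * (k₁ + m * s) : ℤ) : ℝ) := by
    exact_mod_cast congrArg (fun z : ℤ => (z : ℝ)) hveq
  push_cast at hcast
  have hdiv : ((v : ℝ) - (σ₂ : ℝ)) / (G : ℝ) = (e : ℝ) / G + ((k₁ + m * s : ℤ) : ℝ) := by
    field_simp
    push_cast
    linarith [hcast]
  have hround0 : round ((e : ℝ) / G) = 0 := by
    rw [round_eq_zero_iff]
    have he1' : -(d : ℝ) ≤ e := by exact_mod_cast he1
    have he2' : (e : ℝ) ≤ d := by exact_mod_cast he2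
    have hdG' : 2 * (d : ℝ) < G := by exact_mod_cast hdG
    constructor
    · rw [le_div_iff₀ hGr]
      nlinarith
    · rw [div_lt_iff₀ hGr]
      nlinarith
  rw [hk₂, hdiv, round_add_intCast, hround0, zero_add]
  have : (k₁ + ↑m * s) % (m : ℤ) = k₁ % m := by
    simp [Int.add_mul_emod_self_left]
  rw [this, Int.emod_eq_of_lt hk₁.1 hk₁.2]
end

section
/- Security of AKCN: Fix integers q, m, g ≥ 2. For k ∈ ℤ_m, σ ∈ ℤ_q, define Con(σ, k) = ⌊g·(σ + ⌊k·q/m⌉)/q⌉ mod g. If σ is uniformly distributed over ℤ_q, then for all ṽ ∈ ℤ_g and all k, k' ∈ ℤ_m, Pr[Con(σ, k) = ṽ] = Pr[Con(σ, k') = ṽ]; i.e., the signal value is independent of the key k. -/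
/-- Periodicity: the signal value depends only on `n % q`. -/
lemma akcn_period (q g : ℕ) (hq : 0 < q) (v : ℤ) (n : ℤ) :
    (round ((g : ℝ) * (n : ℝ) / (q : ℝ)) % (g : ℤ) = v) ↔
    (round ((g : ℝ) * ((n % (q : ℤ) : ℤ) : ℝ) / (q : ℝ)) % (g : ℤ) = v) := by
  have hq' : (q : ℝ) ≠ 0 := by positivity
  have hdecomp : (g : ℝ) * (n : ℝ) / (q : ℝ) =
      ((g : ℤ) * (n / (q : ℤ)) : ℤ) + (g : ℝ) * ((n % (q : ℤ) : ℤ) : ℝ) / (q : ℝ) := by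
    have h := Int.mul_ediv_add_emod n (q : ℤ)
    have h2 : ((q : ℝ) * ((n / (q : ℤ) : ℤ) : ℝ) + ((n % (q : ℤ) : ℤ) : ℝ)) = (n : ℝ) := by
      exact_mod_cast congrArg (Int.cast : ℤ → ℝ) h
    rw [← h2]
    push_cast
    field_simp
  rw [hdecomp, round_intCast_add, add_comm, Int.add_mul_emod_self_left]

/-- Shift-invariance of the count. -/
lemma akcn_shift (q g : ℕ) (hq : 0 < q) (v t : ℤ) :
    ((Finset.range q).filter fun σ : ℕ =>
      round ((g : ℝ) * ((σ : ℝ) + (t : ℝ)) / (q : ℝ)) % (g : ℤ) = v).card =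
    ((Finset.range q).filter fun σ : ℕ =>
      round ((g : ℝ) * (σ : ℝ) / (q : ℝ)) % (g : ℤ) = v).card := by
  have hqZ : (0 : ℤ) < (q : ℤ) := by exact_mod_cast hq
  refine Finset.card_bij' (fun σ _ => (((σ : ℤ) + t) % (q : ℤ)).toNat)
    (fun σ _ => (((σ : ℤ) - t) % (q : ℤ)).toNat) ?_ ?_ ?_ ?_
  · intro a ha
    simp only [Finset.mem_filter, Finset.mem_range] at ha ⊢
    obtain ⟨ha1, ha2⟩ := ha
    have hnn : 0 ≤ ((a : ℤ) + t) % (q : ℤ) := Int.emod_nonneg _ (by omega)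
    have hlt : ((a : ℤ) + t) % (q : ℤ) < (q : ℤ) := Int.emod_lt_of_pos _ hqZ
    refine ⟨by omega, ?_⟩
    have h1 : ((((a : ℤ) + t) % (q : ℤ)).toNat : ℝ) = ((((a : ℤ) + t) % (q : ℤ) : ℤ) : ℝ) := by
      exact_mod_cast congrArg (Int.cast : ℤ → ℝ) (Int.toNat_of_nonneg hnn)
    rw [h1, ← akcn_period q g hq v ((a : ℤ) + t)]
    have hx : (a : ℝ) + (t : ℝ) = (((a : ℤ) + t : ℤ) : ℝ) := by push_cast; ring
    rwa [hx] at ha2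
  · intro a ha
    simp only [Finset.mem_filter, Finset.mem_range] at ha ⊢
    obtain ⟨ha1, ha2⟩ := ha
    have hnn : 0 ≤ ((a : ℤ) - t) % (q : ℤ) := Int.emod_nonneg _ (by omega)
    have hlt : ((a : ℤ) - t) % (q : ℤ) < (q : ℤ) := Int.emod_lt_of_pos _ hqZ
    refine ⟨by omega, ?_⟩
    have h1 : ((((a : ℤ) - t) % (q : ℤ)).toNat : ℝ) = ((((a : ℤ) - t) % (q : ℤ) : ℤ) : ℝ) := by
      exact_mod_cast congrArg (Int.cast : ℤ → ℝ) (Int.toNat_of_nonneg hnn)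
    have hper := akcn_period q g hq v (((a : ℤ) - t) % (q : ℤ) + t)
    rw [Int.emod_add_emod, sub_add_cancel] at hper
    have hx : ((((a : ℤ) - t) % (q : ℤ) : ℤ) : ℝ) + (t : ℝ) =
        (((((a : ℤ) - t) % (q : ℤ) + t) : ℤ) : ℝ) := by push_cast; ring
    rw [h1, hx, hper]
    exact (akcn_period q g hq v (a : ℤ)).mp ha2
  · intro a ha
    simp only [Finset.mem_filter, Finset.mem_range] at ha
    beta_reduce
    have hnn : 0 ≤ ((a : ℤ) + t) % (q : ℤ) := Int.emod_nonneg _ (by omega)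
    have h1 : (((((a : ℤ) + t) % (q : ℤ)).toNat : ℤ)) = ((a : ℤ) + t) % (q : ℤ) :=
      Int.toNat_of_nonneg hnn
    have h2 : ((((((a : ℤ) + t) % (q : ℤ)).toNat : ℤ)) - t) % (q : ℤ) = (a : ℤ) % (q : ℤ) := by
      rw [h1, Int.sub_emod, Int.emod_emod_of_dvd _ (dvd_refl _), ← Int.sub_emod,
        add_sub_cancel_right]
    have ha' : (a : ℤ) % (q : ℤ) = (a : ℤ) := Int.emod_eq_of_lt (by omega) (by exact_mod_cast ha.1)
    omega
  · intro a ha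
    simp only [Finset.mem_filter, Finset.mem_range] at ha
    beta_reduce
    have hnn : 0 ≤ ((a : ℤ) - t) % (q : ℤ) := Int.emod_nonneg _ (by omega)
    have h1 : (((((a : ℤ) - t) % (q : ℤ)).toNat : ℤ)) = ((a : ℤ) - t) % (q : ℤ) :=
      Int.toNat_of_nonneg hnn
    have h2 : ((((((a : ℤ) - t) % (q : ℤ)).toNat : ℤ)) + t) % (q : ℤ) = (a : ℤ) % (q : ℤ) := by
      rw [h1, Int.emod_add_emod, sub_add_cancel]
    have ha' : (a : ℤ) % (q : ℤ) = (a : ℤ) := Int.emod_eq_of_lt (by omega) (by exact_mod_cast ha.1)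
    omega

/-- Security of AKCN: for σ uniform over ℤ_q, the number of σ
producing a given signal value ṽ is the same for any two keys k, k' ∈ ℤ_m,
where Con(σ,k) = ⌊g·(σ + ⌊k·q/m⌉)/q⌉ mod g. -/
theorem stmt_8 (q m g : ℕ) (hq : 2 ≤ q) (hm : 2 ≤ m) (hg : 2 ≤ g)
    (v k k' : ℤ) (hk : 0 ≤ k ∧ k < (m : ℤ)) (hk' : 0 ≤ k' ∧ k' < (m : ℤ)) :
    ((Finset.range q).filter fun σ : ℕ =>
      round ((g : ℝ) * ((σ : ℝ) +
        ((round ((k : ℝ) * (q : ℝ) / (m : ℝ)) : ℤ) : ℝ)) / (q : ℝ)) % (g : ℤ) = v).card =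
    ((Finset.range q).filter fun σ : ℕ =>
      round ((g : ℝ) * ((σ : ℝ) +
        ((round ((k' : ℝ) * (q : ℝ) / (m : ℝ)) : ℤ) : ℝ)) / (q : ℝ)) % (g : ℤ) = v).card := by
  have h0 : 0 < q := by omega
  rw [akcn_shift q g h0 v (round ((k : ℝ) * (q : ℝ) / (m : ℝ))),
      akcn_shift q g h0 v (round ((k' : ℝ) * (q : ℝ) / (m : ℝ)))]
end

section
/- Efficiency upper bound for key consensus: Let (Con, Rec) be a correct and secure KC scheme with parameters (q, m, g, d), where m ≥ 2: correctness means for all σ₁, σ₂ ∈ ℤ_q with |σ₁ − σ₂|_q ≤ d and any output (k₁, v) of Con(σ₁), Rec(σ₂, v) = k₁; security means when σ₁ is uniform over ℤ_q, the key k₁ is uniform over ℤ_m and independent of the signal v. Then 2·m·d ≤ q·(1 − 1/g). -/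
lemma ndist_symm' (q : ℕ) [NeZero q] (a b : ZMod q) :
    min (a-b).val (q-(a-b).val) = min (b-a).val (q-(b-a).val) := by
  by_cases h : a = b
  · simp [h]
  · have h1 : a - b ≠ 0 := sub_ne_zero.mpr h
    have h2 : (b - a) = -(a - b) := by ring
    rw [h2, ZMod.neg_val, if_neg h1]
    have h3 : (a - b).val < q := ZMod.val_lt _
    have h4 : (a - b).val ≠ 0 := fun h0 => h1 (ZMod.val_eq_zero _ |>.mp h0)
    rw [show q - (q - (a-b).val) = (a-b).val by omega, Nat.min_comm]

lemma expand_lemma (q d : ℕ) [NeZero q] (S N : Finset (ZMod q)) (hS : S.Nonempty)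
    (hclose : ∀ s ∈ S, ∀ y : ZMod q,
      min (s - y).val (q - (s - y).val) ≤ d → y ∈ N)
    (x : ZMod q) (hx : x ∉ N) : S.card + 2 * d ≤ N.card := by
  classical
  set t : ZMod q → ℕ := fun y => (y - x).val with ht
  have hinj : Function.Injective t := by
    intro a b hab
    have := ZMod.val_injective q hab
    exact sub_left_injective this
  have hbound : ∀ s ∈ S, d < t s ∧ t s + d < q := by
    intro s hs
    have hxn : ¬ (min (s - x).val (q - (s - x).val) ≤ d) := fun h => hx (hclose s hs x h)
    push_neg at hxn
    have hvlt : (s - x).val < q := ZMod.val_lt _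
    have h1 : d < (s - x).val := lt_of_lt_of_le hxn (min_le_left _ _)
    have h2 : d < q - (s - x).val := lt_of_lt_of_le hxn (min_le_right _ _)
    refine ⟨h1, ?_⟩
    show (s - x).val + d < q
    omega
  have hWne : (S.image t).Nonempty := hS.image t
  set a := (S.image t).min' hWne with ha
  set b := (S.image t).max' hWne with hb
  obtain ⟨sa, hsa, hta⟩ := Finset.mem_image.mp ((S.image t).min'_mem hWne)
  obtain ⟨sb, hsb, htb⟩ := Finset.mem_image.mp ((S.image t).max'_mem hWne)
  rw [← ha] at hta
  rw [← hb] at htb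
  have hda : d < a := hta ▸ (hbound sa hsa).1
  have hbq : b + d < q := htb ▸ (hbound sb hsb).2
  have hab : a ≤ b := Finset.min'_le _ _ ((S.image t).max'_mem hWne)
  -- key fact: sa - x = (a : ZMod q) etc.
  have hcastval : ∀ c : ZMod q, ((c.val : ℕ) : ZMod q) = c := fun c => by
    simp [ZMod.natCast_val, ZMod.cast_id]
  have hsax : sa - x = ((a : ℕ) : ZMod q) := by rw [← hta]; exact (hcastval _).symm
  have hsbx : sb - x = ((b : ℕ) : ZMod q) := by rw [← htb]; exact (hcastval _).symm
  have hmem1 : ∀ u ∈ Finset.Ico (a - d) a, u ∈ N.image t := by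
    intro u hu
    simp only [Finset.mem_Ico] at hu
    have huq : u < q := by omega
    set y : ZMod q := x + (u : ZMod q) with hy
    have hty : t y = u := by
      simp only [ht, hy, add_sub_cancel_left]
      exact ZMod.val_cast_of_lt huq
    refine Finset.mem_image.mpr ⟨y, ?_, hty⟩
    apply hclose sa hsa y
    have hdiff : sa - y = ((a - u : ℕ) : ZMod q) := by
      have : sa - y = (sa - x) - (y - x) := by ring
      rw [this, hsax, hy, add_sub_cancel_left, ← Nat.cast_sub (by omega)]
    have hval : (sa - y).val = a - u := by
      rw [hdiff]; exact ZMod.val_cast_of_lt (by omega)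
    rw [hval]
    exact le_trans (min_le_left _ _) (by omega)
  have hmem2 : ∀ u ∈ Finset.Ioc b (b + d), u ∈ N.image t := by
    intro u hu
    simp only [Finset.mem_Ioc] at hu
    have huq : u < q := by omega
    set y : ZMod q := x + (u : ZMod q) with hy
    have hty : t y = u := by
      simp only [ht, hy, add_sub_cancel_left]
      exact ZMod.val_cast_of_lt huq
    refine Finset.mem_image.mpr ⟨y, ?_, hty⟩
    apply hclose sb hsb y
    rw [ndist_symm']
    have hdiff : y - sb = ((u - b : ℕ) : ZMod q) := by
      have : y - sb = (y - x) - (sb - x) := by ring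
      rw [this, hsbx, hy, add_sub_cancel_left, ← Nat.cast_sub (by omega)]
    have hval : (y - sb).val = u - b := by
      rw [hdiff]; exact ZMod.val_cast_of_lt (by omega)
    rw [hval]
    exact le_trans (min_le_left _ _) (by omega)
  have hmem0 : S.image t ⊆ N.image t := by
    apply Finset.image_subset_image
    intro s hs
    apply hclose s hs s
    simp
  have hsub : (S.image t) ∪ Finset.Ico (a - d) a ∪ Finset.Ioc b (b + d) ⊆ N.image t := by
    intro u hu
    rcases Finset.mem_union.mp hu with hu | hu
    · rcases Finset.mem_union.mp hu with hu | hu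
      · exact hmem0 hu
      · exact hmem1 u hu
    · exact hmem2 u hu
  have hd1 : Disjoint (S.image t) (Finset.Ico (a - d) a) := by
    rw [Finset.disjoint_left]
    intro u hu hu'
    have := Finset.min'_le _ u hu
    simp only [Finset.mem_Ico] at hu'
    omega
  have hd2 : Disjoint ((S.image t) ∪ Finset.Ico (a - d) a) (Finset.Ioc b (b + d)) := by
    rw [Finset.disjoint_left]
    intro u hu hu'
    simp only [Finset.mem_Ioc] at hu'
    rcases Finset.mem_union.mp hu with hu | hu
    · have := Finset.le_max' _ u hu; omega
    · simp only [Finset.mem_Ico] at hu; omega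
  have hcard : ((S.image t) ∪ Finset.Ico (a - d) a ∪ Finset.Ioc b (b + d)).card
      = S.card + 2 * d := by
    rw [Finset.card_union_of_disjoint hd2, Finset.card_union_of_disjoint hd1,
      Finset.card_image_of_injective _ hinj, Nat.card_Ico, Nat.card_Ioc]
    omega
  calc S.card + 2 * d = _ := hcard.symm
    _ ≤ (N.image t).card := Finset.card_le_card hsub
    _ = N.card := Finset.card_image_of_injective _ hinj

lemma bridge_lemma (q d : ℕ) [NeZero q] (σ₁ σ₂ : Fin q)
    (h : min (((σ₁.val : ℕ) : ZMod q) - ((σ₂.val : ℕ) : ZMod q)).val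
      (q - (((σ₁.val : ℕ) : ZMod q) - ((σ₂.val : ℕ) : ZMod q)).val) ≤ d) :
    min (((σ₁.val : ℤ) - (σ₂.val : ℤ)) % (q : ℤ))
        ((q : ℤ) - ((σ₁.val : ℤ) - (σ₂.val : ℤ)) % (q : ℤ)) ≤ (d : ℤ) := by
  set w := (((σ₁.val : ℕ) : ZMod q) - ((σ₂.val : ℕ) : ZMod q)).val with hw
  have hz : (((σ₁.val : ℤ) - (σ₂.val : ℤ)) : ZMod q)
      = ((σ₁.val : ℕ) : ZMod q) - ((σ₂.val : ℕ) : ZMod q) := by push_cast; ring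
  have hval : ((w : ℕ) : ℤ) = ((σ₁.val : ℤ) - (σ₂.val : ℤ)) % (q : ℤ) := by
    rw [hw, ← hz]
    exact_mod_cast ZMod.val_intCast _
  have hwq : w ≤ q := le_of_lt (ZMod.val_lt _)
  rw [← hval]
  have hcast : ((min w (q - w) : ℕ) : ℤ) ≤ (d : ℤ) := by exact_mod_cast h
  rw [Nat.cast_min, Nat.cast_sub hwq] at hcast
  exact hcast

/-- Efficiency upper bound for key consensus: any correct and
secure KC scheme with parameters (q,m,g,d) satisfies 2·m·d ≤ q·(1 − 1/g).
The probabilistic Con is modelled with a finite nonempty coin set R and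
uniform coins; security (key uniform over ℤ_m and independent of the signal
when σ₁ is uniform) is expressed by counting over ℤ_q × R. -/
theorem stmt_12 (q m g d : ℕ) (hm : 2 ≤ m) (hg : 2 ≤ g)
    (hmq : m ≤ q) (hgq : g ≤ q) (hd : d ≤ q / 2)
    (R : Type) [Fintype R] [Nonempty R]
    (Con : Fin q → R → Fin m × Fin g) (Rec : Fin q → Fin g → Fin m)
    (hcorrect : ∀ (σ₁ σ₂ : Fin q) (r : R),
      min (((σ₁.val : ℤ) - (σ₂.val : ℤ)) % (q : ℤ))
          ((q : ℤ) - ((σ₁.val : ℤ) - (σ₂.val : ℤ)) % (q : ℤ)) ≤ (d : ℤ) →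
      Rec σ₂ (Con σ₁ r).2 = (Con σ₁ r).1)
    (hsec_uniform : ∀ k : Fin m,
      ((Finset.univ : Finset (Fin q × R)).filter
        (fun p => (Con p.1 p.2).1 = k)).card * m = q * Fintype.card R)
    (hsec_indep : ∀ (k : Fin m) (v : Fin g),
      ((Finset.univ : Finset (Fin q × R)).filter
        (fun p => Con p.1 p.2 = (k, v))).card * (q * Fintype.card R) =
      ((Finset.univ : Finset (Fin q × R)).filter
        (fun p => (Con p.1 p.2).1 = k)).card *
      ((Finset.univ : Finset (Fin q × R)).filter
        (fun p => (Con p.1 p.2).2 = v)).card) :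
    (2 * m * d : ℝ) ≤ (q : ℝ) * (1 - 1 / (g : ℝ)) := by
  classical
  have hq2 : 2 ≤ q := le_trans hm hmq
  haveI : NeZero q := ⟨by omega⟩
  have hRpos : 0 < Fintype.card R := Fintype.card_pos
  -- Step 1: find a popular signal v
  set T : Fin g → Finset (Fin q) :=
    fun v => Finset.univ.filter (fun σ => ∃ r, (Con σ r).2 = v) with hT
  have hcover : q ≤ ∑ v : Fin g, (T v).card := by
    have hsub : (Finset.univ : Finset (Fin q)) ⊆ Finset.univ.biUnion T := by
      intro σ _
      refine Finset.mem_biUnion.mpr ⟨(Con σ (Classical.arbitrary R)).2, Finset.mem_univ _, ?_⟩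
      simp only [hT, Finset.mem_filter, Finset.mem_univ, true_and]
      exact ⟨Classical.arbitrary R, rfl⟩
    calc q = (Finset.univ : Finset (Fin q)).card := (Finset.card_fin q).symm
      _ ≤ (Finset.univ.biUnion T).card := Finset.card_le_card hsub
      _ ≤ ∑ v : Fin g, (T v).card := Finset.card_biUnion_le
  obtain ⟨v, -, hvmax⟩ := Finset.exists_max_image (Finset.univ : Finset (Fin g))
    (fun v => (T v).card) ⟨⟨0, by omega⟩, Finset.mem_univ _⟩
  have hvq : q ≤ g * (T v).card := by
    calc q ≤ ∑ v' : Fin g, (T v').card := hcover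
      _ ≤ ∑ _v' : Fin g, (T v).card :=
        Finset.sum_le_sum (fun i _ => hvmax i (Finset.mem_univ i))
      _ = g * (T v).card := by
        simp [Finset.sum_const, Finset.card_univ]
  have hTvpos : 0 < (T v).card := by
    rcases Nat.eq_zero_or_pos (T v).card with h | h
    · rw [h, Nat.mul_zero] at hvq; omega
    · exact h
  -- Step 2: each key appears with signal v
  obtain ⟨σ0, hσ0⟩ := Finset.card_pos.mp hTvpos
  have hcv : 0 < ((Finset.univ : Finset (Fin q × R)).filter
      (fun p => (Con p.1 p.2).2 = v)).card := by
    simp only [hT, Finset.mem_filter, Finset.mem_univ, true_and] at hσ0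
    obtain ⟨r, hr⟩ := hσ0
    exact Finset.card_pos.mpr ⟨(σ0, r), Finset.mem_filter.mpr ⟨Finset.mem_univ _, hr⟩⟩
  set S : Fin m → Finset (Fin q) :=
    fun k => Finset.univ.filter (fun σ => ∃ r, Con σ r = (k, v)) with hS
  have hSne : ∀ k, (S k).Nonempty := by
    intro k
    have hk : 0 < ((Finset.univ : Finset (Fin q × R)).filter
        (fun p => (Con p.1 p.2).1 = k)).card := by
      rcases Nat.eq_zero_or_pos ((Finset.univ : Finset (Fin q × R)).filter
        (fun p => (Con p.1 p.2).1 = k)).card with h | h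
      · have := hsec_uniform k
        rw [h, Nat.zero_mul] at this
        have : 0 < q * Fintype.card R := Nat.mul_pos (by omega) hRpos
        omega
      · exact h
    have hkv : 0 < ((Finset.univ : Finset (Fin q × R)).filter
        (fun p => Con p.1 p.2 = (k, v))).card := by
      rcases Nat.eq_zero_or_pos ((Finset.univ : Finset (Fin q × R)).filter
        (fun p => Con p.1 p.2 = (k, v))).card with h | h
      · have h2 := hsec_indep k v
        rw [h, Nat.zero_mul] at h2
        have := Nat.mul_pos hk hcv
        omega
      · exact h
    obtain ⟨p, hp⟩ := Finset.card_pos.mp hkv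
    simp only [Finset.mem_filter, Finset.mem_univ, true_and] at hp
    exact ⟨p.1, Finset.mem_filter.mpr ⟨Finset.mem_univ _, ⟨p.2, hp⟩⟩⟩
  -- Step 3: fibers of Rec · v
  set F : Fin m → Finset (Fin q) := fun k => Finset.univ.filter (fun σ => Rec σ v = k) with hF
  set ι : Fin q → ZMod q := fun σ => ((σ.val : ℕ) : ZMod q) with hι
  have hιinj : Function.Injective ι := by
    intro a b hab
    have h2 := congrArg ZMod.val hab
    simp only [hι] at h2
    rw [ZMod.val_cast_of_lt a.isLt, ZMod.val_cast_of_lt b.isLt] at h2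
    exact Fin.ext h2
  have hSrec : ∀ k, ∀ σ ∈ S k, Rec σ v = k := by
    intro k σ hσ
    simp only [hS, Finset.mem_filter, Finset.mem_univ, true_and] at hσ
    obtain ⟨r, hr⟩ := hσ
    have hdist : min (((σ.val : ℤ) - (σ.val : ℤ)) % (q : ℤ))
        ((q : ℤ) - ((σ.val : ℤ) - (σ.val : ℤ)) % (q : ℤ)) ≤ (d : ℤ) := by
      simp only [sub_self, Int.zero_emod, sub_zero]
      exact le_trans (min_le_left _ _) (Int.ofNat_nonneg d)
    have := hcorrect σ σ r hdist
    rw [hr] at this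
    exact this
  have hkey : ∀ k, (S k).card + 2 * d ≤ (F k).card := by
    intro k
    obtain ⟨k', hk'⟩ : ∃ k' : Fin m, k' ≠ k := by
      by_cases h : k = ⟨0, by omega⟩
      · exact ⟨⟨1, by omega⟩, by simp [h, Fin.ext_iff]⟩
      · exact ⟨⟨0, by omega⟩, fun h0 => h h0.symm⟩
    obtain ⟨σ', hσ'⟩ := hSne k'
    have hx : ι σ' ∉ (F k).image ι := by
      intro hmem
      obtain ⟨τ, hτ, hτι⟩ := Finset.mem_image.mp hmem
      have hτσ : τ = σ' := hιinj hτι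
      subst hτσ
      simp only [hF, Finset.mem_filter, Finset.mem_univ, true_and] at hτ
      exact hk' ((hSrec k' τ hσ') ▸ hτ ▸ rfl)
    have hclose : ∀ s ∈ (S k).image ι, ∀ y : ZMod q,
        min (s - y).val (q - (s - y).val) ≤ d → y ∈ (F k).image ι := by
      intro s hs y hdist
      obtain ⟨σ₁, hσ₁, rfl⟩ := Finset.mem_image.mp hs
      set σ₂ : Fin q := ⟨y.val, ZMod.val_lt y⟩ with hσ₂
      have hyι : ι σ₂ = y := by
        simp only [hι, hσ₂]
        simp [ZMod.natCast_val, ZMod.cast_id]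
      simp only [hS, Finset.mem_filter, Finset.mem_univ, true_and] at hσ₁
      obtain ⟨r, hr⟩ := hσ₁
      have hdist' : min (((σ₁.val : ℤ) - (σ₂.val : ℤ)) % (q : ℤ))
          ((q : ℤ) - ((σ₁.val : ℤ) - (σ₂.val : ℤ)) % (q : ℤ)) ≤ (d : ℤ) := by
        apply bridge_lemma
        rw [← hyι] at hdist
        exact hdist
      have hRec : Rec σ₂ v = k := by
        have h2 := hcorrect σ₁ σ₂ r hdist'
        rw [hr] at h2
        exact h2
      exact Finset.mem_image.mpr ⟨σ₂, Finset.mem_filter.mpr ⟨Finset.mem_univ _, hRec⟩, hyι⟩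
    have h2 := expand_lemma q d ((S k).image ι) ((F k).image ι)
      ((hSne k).image ι) hclose (ι σ') hx
    rwa [Finset.card_image_of_injective _ hιinj, Finset.card_image_of_injective _ hιinj] at h2
  -- Step 4: combine
  have hTle : (T v).card ≤ ∑ k : Fin m, (S k).card := by
    have hsub : T v ⊆ Finset.univ.biUnion S := by
      intro σ hσ
      simp only [hT, Finset.mem_filter, Finset.mem_univ, true_and] at hσ
      obtain ⟨r, hr⟩ := hσ
      refine Finset.mem_biUnion.mpr ⟨(Con σ r).1, Finset.mem_univ _, ?_⟩
      simp only [hS, Finset.mem_filter, Finset.mem_univ, true_and]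
      exact ⟨r, Prod.ext rfl hr⟩
    calc (T v).card ≤ (Finset.univ.biUnion S).card := Finset.card_le_card hsub
      _ ≤ ∑ k : Fin m, (S k).card := Finset.card_biUnion_le
  have hFsum : ∑ k : Fin m, (F k).card = q := by
    have := Finset.card_eq_sum_card_fiberwise
      (f := fun σ : Fin q => Rec σ v) (t := (Finset.univ : Finset (Fin m)))
      (s := (Finset.univ : Finset (Fin q))) (fun σ _ => Finset.mem_univ _)
    rw [Finset.card_fin] at this
    exact this.symm
  have hfinal : (T v).card + 2 * m * d ≤ q := by
    have hsum : ∑ k : Fin m, ((S k).card + 2 * d) ≤ ∑ k : Fin m, (F k).card :=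
      Finset.sum_le_sum (fun k _ => hkey k)
    rw [Finset.sum_add_distrib, Finset.sum_const, Finset.card_univ, Fintype.card_fin,
      hFsum] at hsum
    have := hTle
    simp only [smul_eq_mul] at hsum
    rw [show m * (2 * d) = 2 * m * d from by ring] at hsum
    omega
  -- conclude over ℝ
  have hgR : (0 : ℝ) < g := by positivity
  have h1 : (q : ℝ) ≤ g * (T v).card := by exact_mod_cast hvq
  have h2 : ((T v).card : ℝ) + 2 * m * d ≤ q := by exact_mod_cast hfinal
  have h3 : (q : ℝ) / g ≤ (T v).card := by
    rw [div_le_iff₀ hgR]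
    nlinarith
  have hexp : (q : ℝ) * (1 - 1 / g) = q - q / g := by ring
  rw [hexp]
  linarith
end

section
/- Efficiency upper bound for asymmetric key consensus: Let (Con, Rec) be a correct and secure AKC scheme with parameters (q, m, g, d), m ≥ 2: correctness means for all σ₁, σ₂ ∈ ℤ_q with |σ₁ − σ₂|_q ≤ d and any k₁ ∈ ℤ_m, Rec(σ₂, Con(σ₁, k₁)) = k₁; security means for σ₁ uniform over ℤ_q, the distribution of Con(σ₁, k₁) does not depend on k₁. Then 2·m·d ≤ q·(1 − m/g). -/
open Finset

def Nstep (q : ℕ) (S : Finset (ZMod q)) : Finset (ZMod q) := S ∪ S.image (· + 1)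

lemma Nstep_subset (q : ℕ) (S : Finset (ZMod q)) : S ⊆ Nstep q S := subset_union_left

lemma Nstep_nonempty (q : ℕ) {S : Finset (ZMod q)} (h : S.Nonempty) : (Nstep q S).Nonempty :=
  h.mono (Nstep_subset q S)

lemma Nstep_grow (q : ℕ) [NeZero q] {S : Finset (ZMod q)} (hS : S.Nonempty)
    (hcard : S.card < q) : S.card + 1 ≤ (Nstep q S).card := by
  obtain ⟨a, ha⟩ := hS
  have hex : ∃ x ∈ S, x + 1 ∉ S := by
    by_contra h
    push_neg at h
    have hk : ∀ k : ℕ, a + (k : ZMod q) ∈ S := by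
      intro k
      induction k with
      | zero => simpa using ha
      | succ n ih =>
        have := h _ ih
        push_cast
        rw [← add_assoc]
        exact this
    have huniv : ∀ y : ZMod q, y ∈ S := by
      intro y
      have := hk (y - a).val
      rwa [ZMod.natCast_rightInverse (y - a), add_sub_cancel] at this
    have : (Finset.univ : Finset (ZMod q)).card ≤ S.card :=
      card_le_card (fun y _ => huniv y)
    rw [card_univ, ZMod.card] at this
    omega
  obtain ⟨x, hx, hx1⟩ := hex
  have hins : insert (x + 1) S ⊆ Nstep q S := by
    intro y hy
    rcases mem_insert.mp hy with rfl | hy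
    · exact mem_union_right _ (mem_image.mpr ⟨x, hx, rfl⟩)
    · exact mem_union_left _ hy
  calc S.card + 1 = (insert (x + 1) S).card := (card_insert_of_notMem hx1).symm
    _ ≤ _ := card_le_card hins

lemma Nstep_iter_card (q : ℕ) [NeZero q] {S : Finset (ZMod q)} (hS : S.Nonempty)
    (t : ℕ) : min q (S.card + t) ≤ ((Nstep q)^[t] S).card := by
  induction t with
  | zero => simpa using min_le_right q S.card
  | succ n ih =>
    rw [Function.iterate_succ_apply']
    have hne : ((Nstep q)^[n] S).Nonempty := by
      clear ih
      induction n with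
      | zero => exact hS
      | succ n ih2 => rw [Function.iterate_succ_apply']; exact Nstep_nonempty q ih2
    have hle : ((Nstep q)^[n] S).card ≤ q := by
      have := card_le_card (subset_univ ((Nstep q)^[n] S))
      rwa [card_univ, ZMod.card] at this
    rcases lt_or_ge ((Nstep q)^[n] S).card q with h | h
    · have := Nstep_grow q hne h
      have h2 := card_le_card (Nstep_subset q ((Nstep q)^[n] S))
      omega
    · have h2 := card_le_card (Nstep_subset q ((Nstep q)^[n] S))
      omega

lemma Nstep_iter_mem (q : ℕ) {S : Finset (ZMod q)} (t : ℕ) {x : ZMod q}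
    (hx : x ∈ (Nstep q)^[t] S) : ∃ a ∈ S, ∃ i ≤ t, x = a + (i : ℕ) := by
  induction t generalizing x with
  | zero => exact ⟨x, hx, 0, le_refl 0, by simp⟩
  | succ n ih =>
    rw [Function.iterate_succ_apply'] at hx
    rcases mem_union.mp hx with h | h
    · obtain ⟨a, ha, i, hi, rfl⟩ := ih h
      exact ⟨a, ha, i, by omega, rfl⟩
    · obtain ⟨y, hy, rfl⟩ := mem_image.mp h
      obtain ⟨a, ha, i, hi, rfl⟩ := ih hy
      exact ⟨a, ha, i + 1, by omega, by push_cast; ring⟩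

def akcA (q m g : ℕ) [NeZero q] (R : Type) [Fintype R]
    (Con : Fin q → Fin m → R → Fin g) (v : Fin g) (k : Fin m) : Finset (ZMod q) :=
  univ.filter fun x => ∃ r, Con ⟨x.val, x.val_lt⟩ k r = v

def akcB (q m g : ℕ) [NeZero q] (Rec : Fin q → Fin g → Fin m) (v : Fin g) (k : Fin m) :
    Finset (ZMod q) :=
  univ.filter fun x => Rec ⟨x.val, x.val_lt⟩ v = k

/-- Efficiency upper bound for asymmetric key consensus: any
correct and secure AKC scheme with parameters (q,m,g,d) satisfies
2·m·d ≤ q·(1 − m/g). Security (the distribution of the signal Con(σ₁,k₁)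
for uniform σ₁ does not depend on k₁) is expressed by counting. -/
theorem stmt_13 (q m g d : ℕ) (hm : 2 ≤ m) (hg : 2 ≤ g)
    (hmq : m ≤ q) (hgq : g ≤ q) (hd1 : 1 ≤ d) (hd : d ≤ q / 2)
    (R : Type) [Fintype R] [Nonempty R]
    (Con : Fin q → Fin m → R → Fin g) (Rec : Fin q → Fin g → Fin m)
    (hcorrect : ∀ (σ₁ σ₂ : Fin q) (k : Fin m) (r : R),
      min (((σ₁.val : ℤ) - (σ₂.val : ℤ)) % (q : ℤ))
          ((q : ℤ) - ((σ₁.val : ℤ) - (σ₂.val : ℤ)) % (q : ℤ)) ≤ (d : ℤ) →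
      Rec σ₂ (Con σ₁ k r) = k)
    (hsec : ∀ (v : Fin g) (k k' : Fin m),
      ((Finset.univ : Finset (Fin q × R)).filter
        (fun p => Con p.1 k p.2 = v)).card =
      ((Finset.univ : Finset (Fin q × R)).filter
        (fun p => Con p.1 k' p.2 = v)).card) :
    (2 * m * d : ℝ) ≤ (q : ℝ) * (1 - (m : ℝ) / (g : ℝ)) := by
  haveI : NeZero q := ⟨by omega⟩
  have h2d : 2 * d ≤ q := by omega
  set A := akcA q m g R Con with hA
  set B := akcB q m g Rec with hB
  -- count = security count
  -- (2) nonempty iff count positive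
  have hnc : ∀ v k, (A v k).Nonempty ↔
      0 < ((Finset.univ : Finset (Fin q × R)).filter (fun p => Con p.1 k p.2 = v)).card := by
    intro v k
    constructor
    · rintro ⟨x, hx⟩
      rw [hA, akcA, mem_filter] at hx
      obtain ⟨-, r, hr⟩ := hx
      exact card_pos.mpr ⟨(⟨x.val, x.val_lt⟩, r), mem_filter.mpr ⟨mem_univ _, hr⟩⟩
    · intro hpos
      obtain ⟨p, hp⟩ := card_pos.mp hpos
      rw [mem_filter] at hp
      refine ⟨(p.1.val : ZMod q), ?_⟩
      rw [hA, akcA, mem_filter]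
      refine ⟨mem_univ _, p.2, ?_⟩
      have : (⟨((p.1.val : ZMod q)).val, ZMod.val_lt _⟩ : Fin q) = p.1 := by
        apply Fin.ext
        simp [ZMod.val_cast_of_lt p.1.isLt]
      rw [this]
      exact hp.2
  -- ball ⊆ B
  have hball : ∀ v k, ∀ x ∈ (Nstep q)^[2*d] ((A v k).image (· - ((d : ℕ) : ZMod q))),
      x ∈ B v k := by
    intro v k x hx
    obtain ⟨a', ha', i, hi, rfl⟩ := Nstep_iter_mem q (2*d) hx
    obtain ⟨a, ha, rfl⟩ := mem_image.mp ha'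
    rw [hA, akcA, mem_filter] at ha
    obtain ⟨-, r, hr⟩ := ha
    rw [hB, akcB, mem_filter]
    refine ⟨mem_univ _, ?_⟩
    rw [← hr]
    apply hcorrect
    -- the distance condition
    have hva : ((a.val : ℕ) : ZMod q) = a := ZMod.natCast_rightInverse a
    set x : ZMod q := a - ((d : ℕ) : ZMod q) + ((i : ℕ) : ZMod q) with hxdef
    have hvx : ((x.val : ℕ) : ZMod q) = x := ZMod.natCast_rightInverse x
    have hcong : ((a.val : ℤ) - (x.val : ℤ)) % (q : ℤ) = ((d : ℤ) - (i : ℤ)) % (q : ℤ) := by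
      have h1 : (((a.val : ℤ) - (x.val : ℤ) : ℤ) : ZMod q) = (((d : ℤ) - (i : ℤ) : ℤ) : ZMod q) := by
        push_cast
        rw [hva, hvx, hxdef]
        ring
      exact (ZMod.intCast_eq_intCast_iff _ _ _).mp h1
    show min (((a.val : ℤ) - (x.val : ℤ)) % (q : ℤ))
        ((q : ℤ) - ((a.val : ℤ) - (x.val : ℤ)) % (q : ℤ)) ≤ (d : ℤ)
    rw [hcong]
    have hiz : (i : ℤ) ≤ 2 * d := by exact_mod_cast hi
    have hdq : (2 : ℤ) * d ≤ q := by exact_mod_cast h2d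
    have hd1z : (1 : ℤ) ≤ d := by exact_mod_cast hd1
    rcases le_or_gt 0 ((d : ℤ) - i) with hj | hj
    · have : ((d : ℤ) - i) % q = (d : ℤ) - i := Int.emod_eq_of_lt hj (by omega)
      rw [this]
      exact min_le_of_left_le (by omega)
    · have h3 : ((d : ℤ) - i) % q = ((d : ℤ) - i + q) % q := by
        rw [show (d : ℤ) - i + q = (d : ℤ) - i + q * 1 by ring, Int.add_mul_emod_self_left]
      have h4 : ((d : ℤ) - i + q) % q = (d : ℤ) - i + q :=
        Int.emod_eq_of_lt (by omega) (by omega)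
      rw [h3, h4]
      exact min_le_of_right_le (by omega)
  -- (4) ball card bound
  have hAB : ∀ v k, (A v k).Nonempty → min q ((A v k).card + 2*d) ≤ (B v k).card := by
    intro v k hne
    have hinj : Function.Injective (fun y : ZMod q => y - ((d : ℕ) : ZMod q)) :=
      fun y z h => by simpa using h
    have hcardim : ((A v k).image (· - ((d : ℕ) : ZMod q))).card = (A v k).card :=
      card_image_of_injective _ hinj
    have hneim : ((A v k).image (· - ((d : ℕ) : ZMod q))).Nonempty := hne.image _
    have h1 := Nstep_iter_card q hneim (2*d)
    rw [hcardim] at h1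
    exact le_trans h1 (card_le_card (fun x hx => hball v k x hx))
  -- (3) B sum bound
  have hBsum : ∀ v, ∑ k, (B v k).card ≤ q := by
    intro v
    have hdisj : ∀ k ∈ (univ : Finset (Fin m)), ∀ k' ∈ (univ : Finset (Fin m)), k ≠ k' →
        Disjoint (B v k) (B v k') := by
      intro k _ k' _ hkk
      rw [disjoint_left]
      intro x hx hx'
      rw [hB, akcB, mem_filter] at hx hx'
      exact hkk (hx.2 ▸ hx'.2 ▸ rfl)
    calc ∑ k, (B v k).card = (univ.biUnion (B v)).card := (card_biUnion hdisj).symm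
      _ ≤ (univ : Finset (ZMod q)).card := card_le_card (subset_univ _)
      _ = q := by rw [card_univ, ZMod.card]
  -- (5) packing
  have hApack : ∀ v, (∀ k, (A v k).Nonempty) → (∑ k, (A v k).card) + 2*d*m ≤ q := by
    intro v hv
    have ht : ∑ k, min q ((A v k).card + 2*d) ≤ q :=
      le_trans (sum_le_sum fun k _ => hAB v k (hv k)) (hBsum v)
    have hall : ∀ k, (A v k).card + 2*d ≤ q := by
      by_contra hcon
      push_neg at hcon
      obtain ⟨ks, hks⟩ := hcon
      have hks' : min q ((A v ks).card + 2*d) = q := min_eq_left (by omega)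
      haveI : Nontrivial (Fin m) :=
        ⟨⟨⟨0, by omega⟩, ⟨1, by omega⟩, by simp [Fin.ext_iff]⟩⟩
      obtain ⟨k', hne⟩ := exists_ne ks
      have hne' : ks ≠ k' := hne.symm
      have hk1 : 1 ≤ (A v k').card := card_pos.mpr (hv k')
      have hpair : min q ((A v ks).card + 2*d) + min q ((A v k').card + 2*d) ≤
          ∑ k, min q ((A v k).card + 2*d) := by
        have hsub := sum_le_sum_of_subset (f := fun k => min q ((A v k).card + 2*d))
          (subset_univ ({ks, k'} : Finset (Fin m)))
        rwa [sum_pair hne'] at hsub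
      have hmin' : 1 ≤ min q ((A v k').card + 2*d) := le_min (by omega) (by omega)
      omega
    have : ∑ k, min q ((A v k).card + 2*d) = ∑ k, ((A v k).card + 2*d) :=
      sum_congr rfl fun k _ => min_eq_right (hall k)
    rw [this, sum_add_distrib, sum_const, card_univ, Fintype.card_fin, smul_eq_mul] at ht
    have heq : m * (2*d) = 2*d*m := by ring
    omega
  -- (1) cover
  have hcover : ∀ k, q ≤ ∑ v, (A v k).card := by
    intro k
    have hsub : (univ : Finset (ZMod q)) ⊆ univ.biUnion (fun v => A v k) := by
      intro x _
      refine mem_biUnion.mpr ⟨Con ⟨x.val, x.val_lt⟩ k (Classical.arbitrary R), mem_univ _, ?_⟩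
      rw [hA, akcA, mem_filter]
      exact ⟨mem_univ _, Classical.arbitrary R, rfl⟩
    calc q = (univ : Finset (ZMod q)).card := by rw [card_univ, ZMod.card]
      _ ≤ (univ.biUnion (fun v => A v k)).card := card_le_card hsub
      _ ≤ ∑ v, (A v k).card := card_biUnion_le
  -- G
  set k₀ : Fin m := ⟨0, by omega⟩ with hk₀
  set G : Finset (Fin g) := univ.filter (fun v => (A v k₀).Nonempty) with hGdef
  have hGg : G.card ≤ g := by
    calc G.card ≤ (univ : Finset (Fin g)).card := card_filter_le _ _
      _ = g := by rw [card_univ, Fintype.card_fin]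
  have hGall : ∀ v ∈ G, ∀ k, (A v k).Nonempty := by
    intro v hv k
    rw [hGdef, mem_filter] at hv
    have h0 := (hnc v k₀).mp hv.2
    rw [hnc v k, hsec v k k₀]
    exact h0
  have hGzero : ∀ v ∉ G, ∀ k, (A v k).card = 0 := by
    intro v hv k
    rw [hGdef, mem_filter] at hv
    push_neg at hv
    have hv' := hv (mem_univ v)
    rw [card_eq_zero, ← not_nonempty_iff_eq_empty]
    intro hne
    apply (not_nonempty_iff_eq_empty.mpr hv')
    have h0 := (hnc v k).mp hne
    rw [hnc v k₀, hsec v k₀ k]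
    exact h0
  -- key sum
  have hkey : m * q + 2*d*m*G.card ≤ G.card * q := by
    have h1 : ∑ v ∈ G, ((∑ k, (A v k).card) + 2*d*m) ≤ ∑ v ∈ G, q :=
      sum_le_sum fun v hv => hApack v (hGall v hv)
    rw [sum_const, smul_eq_mul] at h1
    rw [sum_add_distrib, sum_const, smul_eq_mul] at h1
    have h2 : ∑ v ∈ G, ∑ k, (A v k).card = ∑ v, ∑ k, (A v k).card := by
      refine sum_subset (subset_univ G) ?_
      intro v _ hv
      exact sum_eq_zero fun k _ => hGzero v hv k
    have h3 : m * q ≤ ∑ v, ∑ k, (A v k).card := by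
      rw [sum_comm]
      calc m * q = ∑ _k : Fin m, q := by rw [sum_const, card_univ, Fintype.card_fin, smul_eq_mul]
        _ ≤ ∑ k, ∑ v, (A v k).card := sum_le_sum fun k _ => hcover k
    have heq : G.card * (2*d*m) = 2*d*m*G.card := by ring
    omega
  -- integer arithmetic
  have hq2dm : 2*d*m < q := by
    rcases lt_or_ge (2*d*m) q with h | h
    · exact h
    · exfalso
      have h1 : G.card * q ≤ G.card * (2*d*m) := Nat.mul_le_mul_left _ h
      have h4 : 2*2 ≤ m * q := Nat.mul_le_mul hm (by omega)
      have heq : G.card * (2*d*m) = 2*d*m*G.card := by ring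
      omega
  have hfin : m * q + 2*d*m*g ≤ g * q := by
    have h1 : (m : ℤ) * q + 2*d*m*G.card ≤ G.card * q := by exact_mod_cast hkey
    have h2 : ((G.card : ℤ)) ≤ g := by exact_mod_cast hGg
    have h3 : (2 : ℤ)*d*m < q := by exact_mod_cast hq2dm
    have h4 : (0 : ℤ) ≤ ((g : ℤ) - G.card) * ((q : ℤ) - 2*d*m) :=
      mul_nonneg (by omega) (by omega)
    have : (m : ℤ) * q + 2*d*m*g ≤ g * q := by nlinarith
    exact_mod_cast this
  -- to reals
  have hgr : (0 : ℝ) < (g : ℝ) := by positivity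
  have hfinR : (m : ℝ) * q + 2*d*m*g ≤ g * q := by exact_mod_cast hfin
  have h1 : (2*m*d : ℝ) * g ≤ (q * (1 - (m : ℝ)/g)) * g := by
    have : (q : ℝ) * (1 - (m : ℝ)/g) * g = q * g - q * m := by
      field_simp
    rw [this]
    nlinarith
  exact le_of_mul_le_mul_right h1 hgr
end

section
/- Block decomposition of negacyclic polynomial multiplication: Let q be a positive integer and consider the ring ℤ_q[x]/(x^{512} + 1). Write f(x) = Σ_{i=0}^{63} fᵢ(x^{64})·xⁱ and g(x) = Σ_{j=0}^{63} gⱼ(x^{64})·xʲ with fᵢ, gⱼ ∈ R = ℤ_q[x]/(x^8 + 1). If h = f·g is written as h(x) = Σ_{k=0}^{63} h_k(x^{64})·x^k with h_k ∈ R, then for each 0 ≤ k ≤ 63: h_k(x) = Σ_{i+j=k} fᵢ(x)·gⱼ(x) + Σ_{i+j=k+64} fᵢ(x)·gⱼ(x)·x, where the products on the right are taken in R = ℤ_q[x]/(x^8 + 1). -/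
open Polynomial

set_option maxRecDepth 8000
open Polynomial Finset

section aux
variable (q : ℕ)

private lemma phi_smul
    (φ : AdjoinRoot ((X : Polynomial (ZMod q)) ^ 8 + 1) →+*
         AdjoinRoot ((X : Polynomial (ZMod q)) ^ 512 + 1)) (c : ZMod q)
    (y : AdjoinRoot ((X : Polynomial (ZMod q)) ^ 8 + 1)) : φ (c • y) = c • φ y := by
  rw [Algebra.smul_def, Algebra.smul_def, map_mul]
  congr 1
  exact RingHom.congr_fun (Subsingleton.elim (φ.comp (algebraMap _ _)) (algebraMap (ZMod q) _)) c

private lemma monic8 : ((X : Polynomial (ZMod q)) ^ 8 + 1).Monic := by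
  rw [← C_1]; exact monic_X_pow_add_C _ (by norm_num)

private lemma monic512 : ((X : Polynomial (ZMod q)) ^ 512 + 1).Monic := by
  rw [← C_1]; exact monic_X_pow_add_C _ (by norm_num)

private lemma uniq
    (φ : AdjoinRoot ((X : Polynomial (ZMod q)) ^ 8 + 1) →+*
         AdjoinRoot ((X : Polynomial (ZMod q)) ^ 512 + 1))
    (hφ : φ (AdjoinRoot.root ((X : Polynomial (ZMod q)) ^ 8 + 1)) =
      (AdjoinRoot.root ((X : Polynomial (ZMod q)) ^ 512 + 1)) ^ 64)
    (a : Fin 64 → AdjoinRoot ((X : Polynomial (ZMod q)) ^ 8 + 1))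
    (ha : ∑ k : Fin 64, φ (a k) *
        (AdjoinRoot.root ((X : Polynomial (ZMod q)) ^ 512 + 1)) ^ (k : ℕ) = 0) :
    ∀ k, a k = 0 := by
  rcases subsingleton_or_nontrivial (ZMod q) with hs | hn
  · haveI : Subsingleton (AdjoinRoot ((X : Polynomial (ZMod q)) ^ 8 + 1)) :=
      (AdjoinRoot.mk_surjective (g := ((X : Polynomial (ZMod q)) ^ 8 + 1))).subsingleton
    exact fun k => Subsingleton.elim _ _
  set r := AdjoinRoot.root ((X : Polynomial (ZMod q)) ^ 512 + 1) with hr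
  set ρ := AdjoinRoot.root ((X : Polynomial (ZMod q)) ^ 8 + 1) with hρ
  set pb8 := AdjoinRoot.powerBasis' (monic8 q) with hpb8
  set pb512 := AdjoinRoot.powerBasis' (monic512 q) with hpb512
  have d8 : pb8.dim = 8 := by
    simp only [hpb8, AdjoinRoot.powerBasis'_dim]
    rw [← C_1]; exact natDegree_X_pow_add_C
  have d512 : pb512.dim = 512 := by
    simp only [hpb512, AdjoinRoot.powerBasis'_dim]
    rw [← C_1]; exact natDegree_X_pow_add_C
  set c' : Fin pb512.dim → ZMod q := fun m =>
    pb8.basis.repr (a ⟨m.val % 64, Nat.mod_lt _ (by norm_num)⟩)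
      ⟨m.val / 64, lt_of_lt_of_le (by have := lt_of_lt_of_le m.isLt d512.le; omega) d8.ge⟩
    with hc'
  set e : Fin 64 × Fin pb8.dim → Fin pb512.dim := fun p =>
    ⟨64 * p.2.val + p.1.val,
      lt_of_lt_of_le (by have := lt_of_lt_of_le p.2.isLt d8.le; omega) d512.ge⟩ with he
  have hbe : Function.Bijective e := by
    rw [Fintype.bijective_iff_injective_and_card]
    constructor
    · rintro ⟨k, n⟩ ⟨k', n'⟩ hkn
      have h1 := lt_of_lt_of_le n.isLt d8.le
      have h2 := lt_of_lt_of_le n'.isLt d8.le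
      have := Fin.val_eq_of_eq hkn
      simp only [he] at this
      have hk : (k : ℕ) = k' ∧ (n : ℕ) = n' := by
        constructor <;> omega
      ext
      · exact hk.1
      · exact hk.2
    · rw [Fintype.card_prod, Fintype.card_fin, Fintype.card_fin, Fintype.card_fin, d8, d512]
  have harg : ∀ (x y : Fin 64) (u v : Fin pb8.dim), x = y → u = v →
      (pb8.basis.repr (a x)) u = (pb8.basis.repr (a y)) v := by
    rintro x y u v rfl rfl; rfl
  -- each a k in terms of repr
  have hak : ∀ k : Fin 64, a k = ∑ n : Fin pb8.dim, pb8.basis.repr (a k) n • ρ ^ (n : ℕ) := by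
    intro k
    conv_lhs => rw [← pb8.basis.sum_repr (a k)]
    refine Finset.sum_congr rfl fun n _ => ?_
    rw [pb8.coe_basis]
    simp [hpb8, hρ]
  have key : ∑ m : Fin pb512.dim, c' m • pb512.basis m = 0 := by
    have hb : ∀ m : Fin pb512.dim, pb512.basis m = r ^ (m : ℕ) := by
      intro m; rw [pb512.coe_basis]; simp [hpb512, hr]
    calc ∑ m : Fin pb512.dim, c' m • pb512.basis m
        = ∑ p : Fin 64 × Fin pb8.dim, c' (e p) • pb512.basis (e p) :=
          (Fintype.sum_bijective e hbe _ _ (fun p => rfl)).symm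
      _ = ∑ k : Fin 64, φ (a k) * r ^ (k : ℕ) := by
          rw [Fintype.sum_prod_type]
          refine Finset.sum_congr rfl fun k _ => ?_
          rw [hak k, map_sum, Finset.sum_mul]
          refine Finset.sum_congr rfl fun n _ => ?_
          have h1 : c' (e (k, n)) = pb8.basis.repr (a k) n :=
            harg _ _ _ _ (Fin.ext (by simp only [he]; have := k.isLt; omega))
              (Fin.ext (by simp only [he]; have := k.isLt; omega))
          rw [h1, hb, phi_smul, Algebra.smul_def, Algebra.smul_def, mul_assoc]
          refine congrArg (_ * ·) ?_
          rw [map_pow, hφ, ← pow_mul, ← pow_add]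
      _ = 0 := ha
  have hz := Fintype.linearIndependent_iff.mp pb512.basis.linearIndependent c' key
  intro k
  apply pb8.basis.ext_elem
  intro n
  rw [map_zero, Finsupp.coe_zero, Pi.zero_apply]
  exact (harg k _ n _ (Fin.ext (by simp only [he]; have := k.isLt; omega))
    (Fin.ext (by simp only [he]; have := k.isLt; omega))).trans (hz (e (k, n)))

end aux

/-- Block decomposition of negacyclic polynomial multiplication.
Let S = ℤ_q[x]/(x⁵¹² + 1) and R = ℤ_q[x]/(x⁸ + 1), and let φ : R →+* S be the
ring map sending the root of x⁸+1 to (root of x⁵¹²+1)⁶⁴. If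
f = Σᵢ φ(fᵢ)·xⁱ, g = Σⱼ φ(gⱼ)·xʲ (i,j ∈ {0,…,63}) and their product equals
Σₖ φ(hₖ)·xᵏ, then hₖ = Σ_{i+j=k} fᵢ·gⱼ + (Σ_{i+j=k+64} fᵢ·gⱼ)·x in R. -/
theorem stmt_18 (q : ℕ) (hq : 0 < q)
    (φ : AdjoinRoot ((X : Polynomial (ZMod q)) ^ 8 + 1) →+*
         AdjoinRoot ((X : Polynomial (ZMod q)) ^ 512 + 1))
    (hφ : φ (AdjoinRoot.root ((X : Polynomial (ZMod q)) ^ 8 + 1)) =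
      (AdjoinRoot.root ((X : Polynomial (ZMod q)) ^ 512 + 1)) ^ 64)
    (f g h : Fin 64 → AdjoinRoot ((X : Polynomial (ZMod q)) ^ 8 + 1))
    (hmul :
      (∑ i : Fin 64, φ (f i) *
        (AdjoinRoot.root ((X : Polynomial (ZMod q)) ^ 512 + 1)) ^ (i : ℕ)) *
      (∑ j : Fin 64, φ (g j) *
        (AdjoinRoot.root ((X : Polynomial (ZMod q)) ^ 512 + 1)) ^ (j : ℕ)) =
      ∑ k : Fin 64, φ (h k) *
        (AdjoinRoot.root ((X : Polynomial (ZMod q)) ^ 512 + 1)) ^ (k : ℕ)) :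
    ∀ k : Fin 64, h k =
      (∑ p ∈ (Finset.univ : Finset (Fin 64 × Fin 64)).filter
          (fun p => p.1.val + p.2.val = k.val), f p.1 * g p.2) +
      (∑ p ∈ (Finset.univ : Finset (Fin 64 × Fin 64)).filter
          (fun p => p.1.val + p.2.val = k.val + 64), f p.1 * g p.2) *
        AdjoinRoot.root ((X : Polynomial (ZMod q)) ^ 8 + 1) := by
  set r := AdjoinRoot.root ((X : Polynomial (ZMod q)) ^ 512 + 1) with hr
  set ρ := AdjoinRoot.root ((X : Polynomial (ZMod q)) ^ 8 + 1) with hρ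
  set A : ℕ → AdjoinRoot ((X : Polynomial (ZMod q)) ^ 8 + 1) := fun m =>
    ∑ p ∈ (Finset.univ : Finset (Fin 64 × Fin 64)).filter
        (fun p => p.1.val + p.2.val = m), f p.1 * g p.2 with hA
  have key : ∀ k : Fin 64, h k - (A k.val + A (k.val + 64) * ρ) = 0 := by
    apply uniq q φ hφ
    simp only [map_sub, sub_mul, Finset.sum_sub_distrib, sub_eq_zero]
    rw [← hmul, Finset.sum_mul_sum, ← Finset.sum_product', Finset.univ_product_univ, ← hr]
    have hmaps : ∀ p ∈ (Finset.univ : Finset (Fin 64 × Fin 64)),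
        p.1.val + p.2.val ∈ Finset.range 128 := fun p _ =>
      Finset.mem_range.mpr (by omega)
    rw [← Finset.sum_fiberwise_of_maps_to hmaps
        (fun p : Fin 64 × Fin 64 => φ (f p.1) * r ^ (p.1 : ℕ) * (φ (g p.2) * r ^ (p.2 : ℕ)))]
    have fib : ∀ n : ℕ, (∑ p ∈ (Finset.univ : Finset (Fin 64 × Fin 64)).filter
        (fun p => p.1.val + p.2.val = n),
        φ (f p.1) * r ^ (p.1 : ℕ) * (φ (g p.2) * r ^ (p.2 : ℕ))) = φ (A n) * r ^ n := by
      intro n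
      rw [hA]
      rw [map_sum, Finset.sum_mul]
      refine Finset.sum_congr rfl fun p hp => ?_
      rw [Finset.mem_filter] at hp
      rw [map_mul, ← hp.2, pow_add]
      ring
    rw [Finset.range_eq_Ico, ← Finset.sum_Ico_consecutive _ (by norm_num : (0:ℕ) ≤ 64)
        (by norm_num : (64:ℕ) ≤ 128)]
    have e2 : (∑ n ∈ Finset.Ico 64 128, ∑ p ∈ (Finset.univ : Finset (Fin 64 × Fin 64)).filter
          (fun p => p.1.val + p.2.val = n),
          φ (f p.1) * r ^ (p.1 : ℕ) * (φ (g p.2) * r ^ (p.2 : ℕ))) =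
        ∑ n ∈ Finset.range 64, ∑ p ∈ (Finset.univ : Finset (Fin 64 × Fin 64)).filter
          (fun p => p.1.val + p.2.val = 64 + n),
          φ (f p.1) * r ^ (p.1 : ℕ) * (φ (g p.2) * r ^ (p.2 : ℕ)) := by
      rw [Finset.sum_Ico_eq_sum_range]
    rw [e2, ← Finset.range_eq_Ico]
    rw [← Fin.sum_univ_eq_sum_range (fun n => (∑ p ∈ (Finset.univ : Finset (Fin 64 × Fin 64)).filter
        (fun p => p.1.val + p.2.val = n),
        φ (f p.1) * r ^ (p.1 : ℕ) * (φ (g p.2) * r ^ (p.2 : ℕ)))) 64,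
      ← Fin.sum_univ_eq_sum_range (fun n => (∑ p ∈ (Finset.univ : Finset (Fin 64 × Fin 64)).filter
        (fun p => p.1.val + p.2.val = 64 + n),
        φ (f p.1) * r ^ (p.1 : ℕ) * (φ (g p.2) * r ^ (p.2 : ℕ)))) 64,
      ← Finset.sum_add_distrib]
    refine Finset.sum_congr rfl fun k _ => ?_
    have h64 : A (64 + (k : ℕ)) = A ((k : ℕ) + 64) := congrArg A (by omega)
    rw [fib, fib, h64, map_add, add_mul, map_mul, hφ, pow_add]
    ring
  intro k
  have := sub_eq_zero.mp (key k)
  simpa only [hA] using this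
end
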